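/- For graphic functions f and g with g connected (meaning g of the one-vertex graph equals 1), the stellar generating functions F_St(f)(t) = Σ_{n≥0} f(St_n) t^n/n! satisfy F_St(f * g)(t) = F_St(f)(t) · F_St(g)(t). -/

import Mathlib

open scoped Classical

def IsGraphPartition {V : Type*} (Γ : SimpleGraph V) (r : Setoid V) : Prop :=
  ∀ v : V, (Γ.induce {w | r w v}).Connected

def contractSetoid {V : Type*} (Γ : SimpleGraph V) (r : Setoid V) :
    SimpleGraph (Quotient r) :=
  SimpleGraph.fromRel fun a b =>
    ∃ v w : V, Quotient.mk r v = a ∧ Quotient.mk r w = b ∧ Γ.Adj v w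

noncomputable instance setoidFintype (V : Type*) [Fintype V] : Fintype (Setoid V) :=
  Fintype.ofSurjective (fun f : V → V => Setoid.ker f) (fun r => by
    refine ⟨fun v => (Quotient.mk r v).out, Setoid.ext fun a b => ?_⟩
    show (Quotient.mk r a).out = (Quotient.mk r b).out ↔ r a b
    constructor
    · intro h
      have h2 := congrArg (Quotient.mk r) h
      rw [Quotient.out_eq, Quotient.out_eq] at h2
      exact Quotient.eq.mp h2
    · intro h
      have h2 : Quotient.mk r a = Quotient.mk r b := Quotient.sound h
      rw [h2])

noncomputable instance quotFintype {V : Type*} [Finite V] (r : Setoid V) :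
    Fintype (Quotient r) :=
  Fintype.ofFinite _

/-- A "graphic function" with values in `k`: a rule assigning an element of `k`
to every finite simple graph. -/
def GF (k : Type*) : Type _ := (V : Type) → Fintype V → SimpleGraph V → k

/-- A graphic function is honest (constant on isomorphism classes) if it is
invariant under graph isomorphisms. -/
def IsoInvariant {k : Type*} (f : GF k) : Prop :=
  ∀ (V W : Type) (iV : Fintype V) (iW : Fintype W)
    (Γ : SimpleGraph V) (Δ : SimpleGraph W), Nonempty (Γ ≃g Δ) → f V iV Γ = f W iW Δ

/-- The convolution product of graphic functions:
`(φ * ψ)(Γ) = Σ_{I ⊢ Γ} φ(Γ/I) · Π_{G ∈ I} ψ(Γ|_G)`, the sum ranging over all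
partitions of the vertex set of `Γ` into tubes. -/
noncomputable def conv {k : Type*} [CommRing k] (f g : GF k) : GF k := fun V iV Γ =>
  letI := iV
  ∑ r : Setoid V, if IsGraphPartition Γ r then
      f (Quotient r) (Fintype.ofFinite _) (contractSetoid Γ r) *
        ∏ q : Quotient r, g {w : V // Quotient.mk r w = q} (Fintype.ofFinite _)
          (Γ.induce {w | Quotient.mk r w = q})
    else 0

/-- The unit graphic function `ε`, nonzero only on the one-vertex graph. -/
def epsGF {k : Type*} [CommRing k] : GF k := fun V iV _ =>
  if @Fintype.card V iV = 1 then 1 else 0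

/-- The star graph `St_n` on `n+1` vertices: vertex `0` (the core) is adjacent to
all other vertices. -/
def starGraph (n : ℕ) : SimpleGraph (Fin (n + 1)) :=
  SimpleGraph.fromRel fun v _ => v = 0

/- ===================== auxiliary material ===================== -/

lemma starGraph_adj (n : ℕ) (a b : Fin (n+1)) :
    (starGraph n).Adj a b ↔ a ≠ b ∧ (a = 0 ∨ b = 0) := by
  simp only [starGraph, SimpleGraph.fromRel_adj]

/-- Star recognition: a graph whose adjacency is exactly "one endpoint is `c`"
is isomorphic to a star graph. -/
lemma star_iso {W : Type} [Fintype W] (Δ : SimpleGraph W) (c : W)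
    (h : ∀ a b, Δ.Adj a b ↔ a ≠ b ∧ (a = c ∨ b = c)) (m : ℕ)
    (hm : Fintype.card W = m + 1) : Nonempty (Δ ≃g starGraph m) := by
  obtain ⟨e⟩ := Fintype.card_eq.mp (hm.trans (Fintype.card_fin (m+1)).symm)
  refine ⟨⟨e.trans (Equiv.swap (e c) 0), ?_⟩⟩
  intro a b
  simp only [Equiv.trans_apply, starGraph, SimpleGraph.fromRel_adj, h]
  have key : ∀ x : W, Equiv.swap (e c) 0 (e x) = 0 ↔ x = c := by
    intro x
    rw [Equiv.swap_apply_eq_iff, Equiv.swap_apply_right]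
    exact e.apply_eq_iff_eq
  have inj : ∀ x y : W, Equiv.swap (e c) 0 (e x) = Equiv.swap (e c) 0 (e y) ↔ x = y := by
    intro x y
    rw [(Equiv.swap (e c) 0).apply_eq_iff_eq, e.apply_eq_iff_eq]
  constructor
  · rintro ⟨hne, hc⟩
    refine ⟨fun hh => hne ((inj a b).mpr hh ▸ rfl), ?_⟩
    rcases hc with hc | hc
    · left; exact (key a).mp hc
    · right; exact (key b).mp hc
  · rintro ⟨hne, hc⟩
    refine ⟨fun hh => hne ((inj a b).mp hh), ?_⟩
    rcases hc with hc | hc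
    · exact Or.inl ((key a).mpr hc)
    · exact Or.inr ((key b).mpr hc)

/-- A connected `g` takes the value `1` on every one-vertex graph. -/
lemma g_one {k : Type} [CommRing k] {g : GF k} (hg : IsoInvariant g)
    (hg1 : g (Fin 1) inferInstance (⊥ : SimpleGraph (Fin 1)) = 1)
    (W : Type) (iW : Fintype W) (Δ : SimpleGraph W)
    (h1 : ∃ x : W, ∀ y, y = x) : g W iW Δ = 1 := by
  obtain ⟨x, hx⟩ := h1
  rw [← hg1]
  apply hg
  refine ⟨⟨⟨fun _ => 0, fun _ => x, fun a => (hx a).symm, fun b => Subsingleton.elim _ _⟩, ?_⟩⟩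
  intro a b
  simp only [SimpleGraph.bot_adj, false_iff]
  intro hadj
  exact hadj.ne ((hx a).trans (hx b).symm)

def blockSetoid {V : Type} (T : Set V) : Setoid V :=
  ⟨fun a b => a = b ∨ (a ∈ T ∧ b ∈ T),
   ⟨fun _ => Or.inl rfl,
    by rintro a b (rfl | ⟨h1, h2⟩); exacts [Or.inl rfl, Or.inr ⟨h2, h1⟩],
    by rintro a b c (rfl | ⟨h1, h2⟩) (rfl | ⟨h3, h4⟩)
       exacts [Or.inl rfl, Or.inr ⟨h3, h4⟩, Or.inr ⟨h1, h2⟩, Or.inr ⟨h1, h4⟩]⟩⟩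

noncomputable def blockEquiv {V : Type} (T : Set V) (v0 : V) (h0 : v0 ∈ T) :
    Quotient (blockSetoid T) ≃ Option {v : V // v ∉ T} where
  toFun := Quotient.lift (fun v => if h : v ∈ T then none else some ⟨v, h⟩)
    (by rintro a b (rfl | ⟨h1, h2⟩)
        · rfl
        · simp only [dif_pos h1, dif_pos h2])
  invFun := fun o => o.elim (Quotient.mk (blockSetoid T) v0) (fun v => Quotient.mk _ v.1)
  left_inv := by
    intro q
    induction q using Quotient.inductionOn with
    | h v =>
      by_cases h : v ∈ T
      · simp only [Quotient.lift_mk, dif_pos h, Option.elim]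
        exact Quotient.sound (Or.inr ⟨h0, h⟩)
      · simp only [Quotient.lift_mk, dif_neg h, Option.elim]
  right_inv := by
    rintro (_ | ⟨v, h⟩)
    · simp only [Option.elim, Quotient.lift_mk, dif_pos h0]
    · simp only [Option.elim, Quotient.lift_mk, dif_neg h]

lemma connected_of_center {W : Type} (Δ : SimpleGraph W) (c : W)
    (h : ∀ v, v = c ∨ Δ.Adj v c) : Δ.Connected := by
  rw [SimpleGraph.connected_iff]
  refine ⟨fun u v => ?_, ⟨c⟩⟩
  have key : ∀ w, Δ.Reachable w c := fun w => by
    rcases h w with rfl | hw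
    · exact SimpleGraph.Reachable.refl _
    · exact hw.reachable
  exact (key u).trans (key v).symm

lemma exists_adj_of_ne {W : Type} {Δ : SimpleGraph W} (h : Δ.Connected) {a b : W}
    (hab : a ≠ b) : ∃ x, Δ.Adj a x := by
  obtain ⟨p⟩ := h.preconnected a b
  cases p with
  | nil => exact absurd rfl hab
  | cons hadj _ => exact ⟨_, hadj⟩

lemma isGraphPartition_blockSetoid {n : ℕ} (T : Set (Fin (n+1))) (h0 : (0 : Fin (n+1)) ∈ T) :
    IsGraphPartition (starGraph n) (blockSetoid T) := by
  intro v
  by_cases hv : v ∈ T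
  · refine connected_of_center _ ⟨0, Or.inr ⟨h0, hv⟩⟩ (fun a => ?_)
    by_cases ha : (a : Fin (n+1)) = 0
    · exact Or.inl (Subtype.ext ha)
    · exact Or.inr (show (starGraph n).Adj _ _ from (starGraph_adj n _ _).mpr ⟨ha, Or.inr rfl⟩)
  · refine connected_of_center _ ⟨v, Or.inl rfl⟩ (fun a => Or.inl (Subtype.ext ?_))
    rcases a.2 with h | ⟨_, hvT⟩
    · exact h
    · exact absurd hvT hv

lemma graphPartition_eq_blockSetoid {n : ℕ} (r : Setoid (Fin (n+1)))
    (hr : IsGraphPartition (starGraph n) r) :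
    r = blockSetoid {v | r v 0} := by
  refine Setoid.ext fun a b => ⟨fun hab => ?_, fun hab => ?_⟩
  · by_cases heq : a = b
    · exact Or.inl heq
    · refine Or.inr ?_
      have hconn := hr b
      have hane : (⟨a, hab⟩ : {w | r w b}) ≠ ⟨b, r.refl b⟩ := fun h =>
        heq (congrArg Subtype.val h)
      obtain ⟨x, hx⟩ := exists_adj_of_ne hconn hane
      have hadj : (starGraph n).Adj a ↑x := hx
      rcases ((starGraph_adj n _ _).mp hadj).2 with h | h
      · exact ⟨h ▸ r.refl a, r.symm (h ▸ hab)⟩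
      · have hr0b : r (0 : Fin (n+1)) b := h ▸ x.2
        exact ⟨r.trans hab (r.symm hr0b), r.symm hr0b⟩
  · rcases hab with rfl | ⟨h1, h2⟩
    · exact r.refl a
    · exact r.trans h1 (r.symm h2)

section T
variable {n : ℕ} (T : Finset (Fin (n+1))) (h0 : (0 : Fin (n+1)) ∈ T)
include h0

lemma mk_eq_mk_zero_iff (w : Fin (n+1)) :
    Quotient.mk (blockSetoid (↑T : Set (Fin (n+1)))) w
      = Quotient.mk (blockSetoid (↑T : Set (Fin (n+1)))) 0 ↔ w ∈ T := by
  constructor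
  · intro h
    rcases Quotient.eq''.mp h with h | ⟨h1, _⟩
    · exact h ▸ h0
    · exact h1
  · intro h
    exact Quotient.sound (Or.inr ⟨h, h0⟩)

omit h0 in
lemma contract_adj (a b : Quotient (blockSetoid (↑T : Set (Fin (n+1))))) :
    (contractSetoid (starGraph n) (blockSetoid ↑T)).Adj a b ↔
      a ≠ b ∧ (a = Quotient.mk _ 0 ∨ b = Quotient.mk _ 0) := by
  rw [contractSetoid, SimpleGraph.fromRel_adj]
  constructor
  · rintro ⟨hne, ⟨v, w, hv, hw, hadj⟩ | ⟨v, w, hv, hw, hadj⟩⟩ <;>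
      rcases ((starGraph_adj n _ _).mp hadj).2 with h | h
    · exact ⟨hne, Or.inl (hv ▸ congrArg _ h)⟩
    · exact ⟨hne, Or.inr (hw ▸ congrArg _ h)⟩
    · exact ⟨hne, Or.inr (hv ▸ congrArg _ h)⟩
    · exact ⟨hne, Or.inl (hw ▸ congrArg _ h)⟩
  · rintro ⟨hne, h | h⟩
    · refine ⟨hne, Or.inl ⟨0, b.out, h.symm, b.out_eq, (starGraph_adj n _ _).mpr
        ⟨fun hh => hne ?_, Or.inl rfl⟩⟩⟩
      rw [h, ← b.out_eq, ← hh]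
    · refine ⟨hne, Or.inr ⟨0, a.out, h.symm, a.out_eq, (starGraph_adj n _ _).mpr
        ⟨fun hh => hne ?_, Or.inl rfl⟩⟩⟩
      rw [h, ← a.out_eq, ← hh]

lemma quotient_card (iQ : Fintype (Quotient (blockSetoid (↑T : Set (Fin (n+1)))))) :
    @Fintype.card _ iQ = (n + 1 - T.card) + 1 := by
  rw [Fintype.card_congr (blockEquiv (↑T : Set (Fin (n+1))) 0 h0), Fintype.card_option]
  congr 1
  rw [Fintype.card_subtype_compl]
  congr 1
  · exact Fintype.card_fin (n+1)
  · rw [← Fintype.card_coe T]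
    exact Fintype.card_congr (Equiv.subtypeEquivRight (fun v => Finset.mem_coe))

lemma block_card (iB : Fintype {w : Fin (n+1) //
      Quotient.mk (blockSetoid (↑T : Set (Fin (n+1)))) w = Quotient.mk _ 0}) :
    @Fintype.card _ iB = T.card := by
  rw [← Fintype.card_coe T]
  exact Fintype.card_congr (Equiv.subtypeEquivRight (fun w => mk_eq_mk_zero_iff T h0 w))

lemma singleton_class (q : Quotient (blockSetoid (↑T : Set (Fin (n+1)))))
    (hq : q ≠ Quotient.mk _ 0) :
    ∃ x : {w : Fin (n+1) // Quotient.mk (blockSetoid (↑T : Set (Fin (n+1)))) w = q},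
      ∀ y, y = x := by
  refine ⟨⟨q.out, q.out_eq⟩, ?_⟩
  rintro ⟨w, hw⟩
  have hwT : w ∉ T := fun hh => hq (hw ▸ (mk_eq_mk_zero_iff T h0 w).mpr hh)
  have := Quotient.eq''.mp (hw.trans q.out_eq.symm)
  rcases this with h | ⟨h1, _⟩
  · exact Subtype.ext h
  · exact absurd h1 hwT

end T

/- ===================== the theorem ===================== -/

/-- For `g` connected (`g` of the one-vertex graph equals `1`), the stellar
generating functions satisfy `F_St(f * g) = F_St(f) · F_St(g)`, i.e.
coefficientwise `(f * g)(St_n) = Σ_{i=0}^n (n choose i) f(St_i) g(St_{n−i})`. -/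
theorem stmt13 {k : Type} [CommRing k] (f g : GF k)
    (hf : IsoInvariant f) (hg : IsoInvariant g)
    (hg1 : g (Fin 1) inferInstance (⊥ : SimpleGraph (Fin 1)) = 1) (n : ℕ) :
    conv f g (Fin (n + 1)) inferInstance (starGraph n) =
      ∑ i ∈ Finset.range (n + 1),
        (n.choose i) • (f (Fin (i + 1)) inferInstance (starGraph i) *
          g (Fin (n - i + 1)) inferInstance (starGraph (n - i))) := by
  classical
  set V := Fin (n + 1)
  -- the value of a summand, as a function of the size of the nontrivial block
  set Φ : ℕ → k := fun m =>
    f (Fin (n - m + 1)) inferInstance (starGraph (n - m)) *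
      g (Fin (m + 1)) inferInstance (starGraph m) with hΦ
  -- Step 1: the term for `blockSetoid ↑T` equals `Φ (T.card - 1)`
  have term_eq : ∀ T : Finset V, (0 : V) ∈ T →
      (f (Quotient (blockSetoid (↑T : Set V))) (Fintype.ofFinite _)
          (contractSetoid (starGraph n) (blockSetoid ↑T)) *
        ∏ q : Quotient (blockSetoid (↑T : Set V)),
          g {w : V // Quotient.mk (blockSetoid (↑T : Set V)) w = q} (Fintype.ofFinite _)
            ((starGraph n).induce {w | Quotient.mk (blockSetoid (↑T : Set V)) w = q}))
        = Φ (T.card - 1) := by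
    intro T h0
    have hT1 : 1 ≤ T.card := Finset.card_pos.mpr ⟨0, h0⟩
    have hTn : T.card ≤ n + 1 := by
      have h1 := Finset.card_le_univ T
      rwa [show Fintype.card V = n + 1 from Fintype.card_fin _] at h1
    have hfpart : f (Quotient (blockSetoid (↑T : Set V))) (Fintype.ofFinite _)
        (contractSetoid (starGraph n) (blockSetoid ↑T))
        = f (Fin (n - (T.card - 1) + 1)) inferInstance (starGraph (n - (T.card - 1))) := by
      apply hf
      apply star_iso (Δ := contractSetoid (starGraph n) (blockSetoid ↑T))
        (c := Quotient.mk (blockSetoid (↑T : Set V)) 0)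
      · exact fun a b => contract_adj T a b
      · rw [quotient_card T h0]
        omega
    have hgpart : (∏ q : Quotient (blockSetoid (↑T : Set V)),
          g {w : V // Quotient.mk (blockSetoid (↑T : Set V)) w = q} (Fintype.ofFinite _)
            ((starGraph n).induce {w | Quotient.mk (blockSetoid (↑T : Set V)) w = q}))
        = g (Fin ((T.card - 1) + 1)) inferInstance (starGraph (T.card - 1)) := by
      rw [Finset.prod_eq_single (Quotient.mk (blockSetoid (↑T : Set V)) 0)]
      · apply hg
        apply star_iso (c := (⟨0, rfl⟩ :
          {w : V // Quotient.mk (blockSetoid (↑T : Set V)) w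
            = Quotient.mk (blockSetoid (↑T : Set V)) 0}))
        · intro a b
          constructor
          · intro hadj
            obtain ⟨hne, hor⟩ := (starGraph_adj n a.1 b.1).mp hadj
            exact ⟨fun hh => hne (congrArg Subtype.val hh),
              hor.imp (fun h => Subtype.ext h) (fun h => Subtype.ext h)⟩
          · rintro ⟨hne, hor⟩
            refine show (starGraph n).Adj a.1 b.1 from (starGraph_adj n a.1 b.1).mpr
              ⟨fun hh => hne (Subtype.ext hh), hor.imp (fun h => congrArg Subtype.val h)
                (fun h => congrArg Subtype.val h)⟩
        · rw [block_card T h0]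
          omega
      · intro q _ hq
        exact g_one hg hg1 _ _ _ (singleton_class T h0 q hq)
      · intro h
        exact absurd (Finset.mem_univ _) h
    rw [hfpart, hgpart]
  -- Step 2: rewrite the convolution as a sum over blocks `T` containing `0`
  have step2 : conv f g (Fin (n + 1)) inferInstance (starGraph n)
      = ∑ T ∈ Finset.univ.filter (fun T : Finset V => (0 : V) ∈ T), Φ (T.card - 1) := by
    show (∑ r : Setoid V, if IsGraphPartition (starGraph n) r then
        f (Quotient r) (Fintype.ofFinite _) (contractSetoid (starGraph n) r) *
          ∏ q : Quotient r, g {w : V // Quotient.mk r w = q} (Fintype.ofFinite _)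
            ((starGraph n).induce {w | Quotient.mk r w = q})
      else 0) = _
    rw [← Finset.sum_filter]
    refine Eq.symm (Finset.sum_nbij'
      (s := Finset.univ.filter (fun T : Finset V => (0 : V) ∈ T))
      (t := Finset.univ.filter (IsGraphPartition (starGraph n)))
      (f := fun T => Φ (T.card - 1))
      (g := fun r => f (Quotient r) (Fintype.ofFinite _) (contractSetoid (starGraph n) r) *
          ∏ q : Quotient r, g {w : V // Quotient.mk r w = q} (Fintype.ofFinite _)
            ((starGraph n).induce {w | Quotient.mk r w = q}))
      (fun T => blockSetoid (↑T : Set V))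
      (fun r => Finset.univ.filter (fun v => r v 0)) ?_ ?_ ?_ ?_ ?_)
    · intro T hT
      simp only [Finset.mem_filter, Finset.mem_univ, true_and] at hT ⊢
      exact isGraphPartition_blockSetoid (↑T : Set V) hT
    · intro r hr
      simp only [Finset.mem_filter, Finset.mem_univ, true_and]
      exact Setoid.refl' r 0
    · intro T hT
      simp only [Finset.mem_filter, Finset.mem_univ, true_and] at hT
      ext v
      simp only [Finset.mem_filter, Finset.mem_univ, true_and]
      constructor
      · rintro (rfl | ⟨h1, _⟩)
        · exact hT
        · exact h1
      · intro h
        exact Or.inr ⟨h, hT⟩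
    · intro r hr
      simp only [Finset.mem_filter, Finset.mem_univ, true_and] at hr
      have hkey := (graphPartition_eq_blockSetoid r hr).symm
      refine Eq.trans ?_ hkey
      ext v
      rw [show (↑(Finset.univ.filter (fun v => r v 0)) : Set (Fin (n+1))) = {v | r v 0} from by ext; simp]
    · intro T hT
      simp only [Finset.mem_filter, Finset.mem_univ, true_and] at hT
      exact (term_eq T hT).symm
  rw [step2]
  have step3 : ∑ T ∈ Finset.univ.filter (fun T : Finset V => (0 : V) ∈ T), Φ (T.card - 1)
      = ∑ S ∈ (Finset.univ.erase (0 : V)).powerset, Φ S.card := by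
    refine Finset.sum_nbij' (fun T => T.erase 0) (fun S => insert 0 S) ?_ ?_ ?_ ?_ ?_
    · intro T hT
      exact Finset.mem_powerset.mpr (Finset.erase_subset_erase _ (Finset.subset_univ T))
    · intro S hS
      simp only [Finset.mem_filter, Finset.mem_univ, true_and]
      exact Finset.mem_insert_self 0 S
    · intro T hT
      simp only [Finset.mem_filter, Finset.mem_univ, true_and] at hT
      exact Finset.insert_erase hT
    · intro S hS
      have h0S : (0 : V) ∉ S := fun h =>
        (Finset.mem_erase.mp (Finset.mem_powerset.mp hS h)).1 rfl
      exact Finset.erase_insert h0S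
    · intro T hT
      simp only [Finset.mem_filter, Finset.mem_univ, true_and] at hT
      rw [Finset.card_erase_of_mem hT]
  rw [step3]
  have hU : (Finset.univ.erase (0 : V)).card = n := by
    rw [Finset.card_erase_of_mem (Finset.mem_univ _), Finset.card_univ]
    simp [V]
  have step4 : ∑ S ∈ (Finset.univ.erase (0 : V)).powerset, Φ S.card
      = ∑ j ∈ Finset.range (n + 1), (n.choose j) • Φ j := by
    rw [Finset.sum_powerset, hU]
    refine Finset.sum_congr rfl fun j hj => ?_
    rw [Finset.sum_congr rfl (fun S hS => congrArg Φ (Finset.mem_powersetCard.mp hS).2),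
      Finset.sum_const, Finset.card_powersetCard, hU]
  rw [step4]
  rw [← Finset.sum_range_reflect (fun i => (n.choose i) •
    (f (Fin (i + 1)) inferInstance (starGraph i) *
      g (Fin (n - i + 1)) inferInstance (starGraph (n - i)))) (n + 1)]
  refine Finset.sum_congr rfl fun j hj => ?_
  simp only [Finset.mem_range] at hj
  have hjn : j ≤ n := by omega
  rw [show n + 1 - 1 - j = n - j from by omega]
  rw [show n - (n - j) = j from by omega]
  rw [Nat.choose_symm hjn]
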